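/- Let M be an n×n complex matrix (n ≥ 1), b a block assignment, M_D the pinching of M with respect to b, and M_off = M − M_D. Assume M_D is invertible and ρ = ρ(A) < 1 where A = M_D⁻¹ M_off; set c = −n·ln(1 − ρ). For m ≥ 1 define L_m = Σ_{p=1}^m ((−1)^{p−1}/p)·trace(A^p) and Δ_m = det(M_D)·exp(L_m). Then |det(M) − Δ_m| / |Δ_m| ≤ c ρ^m · exp(c ρ^m). If in addition c ρ^m < 1, then |det(M) − Δ_m| / |Δ_m| ≤ (7/4) c ρ^m. -/

import Mathlib

open Matrix

/-- The pinching (block diagonal part) of a matrix `M` with respect to a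
block assignment `b`. -/
def pinch {n k : ℕ} (b : Fin n → Fin k) (M : Matrix (Fin n) (Fin n) ℂ) :
    Matrix (Fin n) (Fin n) ℂ :=
  fun i j => if b i = b j then M i j else 0

section Aux

open Polynomial

lemma eval_charpoly'' {n : ℕ} (A : Matrix (Fin n) (Fin n) ℂ) (y : ℂ) :
    A.charpoly.eval y = (y • (1 : Matrix (Fin n) (Fin n) ℂ) - A).det := by
  rw [Matrix.charpoly, eval_det, matPolyEquiv_charmatrix]
  simp only [eval_sub, eval_X, eval_C, Matrix.scalar_apply, Matrix.smul_one_eq_diagonal]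

-- swap of two multiset products
lemma multiset_prod_comm {α β : Type*} (s : Multiset α) (t : Multiset β) (f : α → β → ℂ) :
    (s.map (fun a => (t.map (f a)).prod)).prod
      = (t.map (fun b => (s.map (fun a => f a b)).prod)).prod := by
  induction s using Multiset.induction with
  | empty => simp
  | cons a s ih => simp [ih, ← Multiset.prod_map_mul]

lemma multiset_sum_finset_sum {α : Type*} (s : Multiset α) (t : Finset ℕ) (g : ℕ → α → ℂ) :
    ∑ p ∈ t, (s.map (g p)).sum = (s.map (fun μ => ∑ p ∈ t, g p μ)).sum := by
  induction s using Multiset.induction with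
  | empty => simp
  | cons a s ih => simp [ih, Finset.sum_add_distrib]

lemma exp_multiset_sum (s : Multiset ℂ) :
    Complex.exp s.sum = (s.map Complex.exp).prod := by
  induction s using Multiset.induction with
  | empty => simp
  | cons a s ih => simp [Complex.exp_add, ih]

lemma prod_map_neg' {α : Type*} (s : Multiset α) (f : α → ℂ) :
    (s.map (fun a => -f a)).prod = (-1) ^ Multiset.card s * (s.map f).prod := by
  have : (s.map (fun a => -f a)) = (s.map (fun a => (-1) * f a)) := by simp
  rw [this, Multiset.prod_map_mul, Multiset.map_const', Multiset.prod_replicate]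

lemma det_smul_one_sub_pow {n : ℕ} (A : Matrix (Fin n) (Fin n) ℂ) {p : ℕ} (hp : 0 < p) (y : ℂ) :
    (y • (1 : Matrix (Fin n) (Fin n) ℂ) - A ^ p).det
      = (A.charpoly.roots.map (fun μ => y - μ ^ p)).prod := by
  set s := A.charpoly.roots with hs_def
  have hs : A.charpoly = (s.map fun a => X - C a).prod :=
    (IsAlgClosed.splits _).eq_prod_roots_of_monic A.charpoly_monic
  have hsc : Multiset.card s = n := by
    rw [hs_def, splits_iff_card_roots.mp (IsAlgClosed.splits _),
      Matrix.charpoly_natDegree_eq_dim, Fintype.card_fin]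
  obtain ⟨z, hz⟩ := IsAlgClosed.exists_pow_nat_eq y hp
  have hω := Complex.isPrimitiveRoot_exp p hp.ne'
  have hcard : Multiset.card (nthRoots p y) = p := by
    rw [hω.nthRoots_eq hz]; simp
  have hfact : (X : ℂ[X]) ^ p - C y = ((nthRoots p y).map fun r => X - C r).prod := by
    refine (prod_multiset_X_sub_C_of_monic_of_roots_card_eq (monic_X_pow_sub_C y hp.ne') ?_).symm
    rw [show ((X : ℂ[X]) ^ p - C y).roots = nthRoots p y from rfl, hcard,
      natDegree_X_pow_sub_C]
  -- eval of charpoly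
  have heval : ∀ r : ℂ, (r • (1 : Matrix (Fin n) (Fin n) ℂ) - A).det
      = (s.map fun μ => r - μ).prod := by
    intro r
    rw [← eval_charpoly'', hs, eval_multiset_prod, Multiset.map_map]
    simp
  have hdet1 : ∀ r : ℂ, (A - r • (1 : Matrix (Fin n) (Fin n) ℂ)).det
      = (s.map fun μ => μ - r).prod := by
    intro r
    have : A - r • (1 : Matrix (Fin n) (Fin n) ℂ)
        = -(r • (1 : Matrix (Fin n) (Fin n) ℂ) - A) := (neg_sub _ _).symm
    rw [this, Matrix.det_neg, heval r, Fintype.card_fin, ← hsc, ← prod_map_neg']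
    simp
  -- matrix factorization
  have hmat : A ^ p - y • (1 : Matrix (Fin n) (Fin n) ℂ)
      = ((nthRoots p y).toList.map (fun r => A - r • 1)).prod := by
    have h1 : (aeval A) ((X : ℂ[X]) ^ p - C y) = A ^ p - y • 1 := by
      simp [Algebra.algebraMap_eq_smul_one]
    rw [← h1, hfact]
    have h2 : (((nthRoots p y).map fun r => (X : ℂ[X]) - C r)).prod
        = ((nthRoots p y).toList.map (fun r => (X : ℂ[X]) - C r)).prod := by
      conv_lhs => rw [← Multiset.coe_toList (nthRoots p y)]
      rw [Multiset.map_coe, Multiset.prod_coe]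
    rw [h2, map_list_prod (aeval A : ℂ[X] →ₐ[ℂ] Matrix (Fin n) (Fin n) ℂ), List.map_map]
    congr 1
    ext r
    simp [Algebra.algebraMap_eq_smul_one]
  -- take determinants
  have hdets : (A ^ p - y • (1 : Matrix (Fin n) (Fin n) ℂ)).det
      = ((nthRoots p y).map (fun r => (s.map fun μ => μ - r).prod)).prod := by
    rw [hmat]
    have hd := map_list_prod (detMonoidHom : Matrix (Fin n) (Fin n) ℂ →* ℂ)
        (List.map (fun r => A - r • 1) (nthRoots p y).toList)
    simp only [Matrix.coe_detMonoidHom] at hd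
    rw [hd, List.map_map]
    conv_rhs => rw [← Multiset.coe_toList (nthRoots p y)]
    rw [Multiset.map_coe, Multiset.prod_coe]
    simp only [Function.comp_def, hdet1]
  -- eval μ of hfact
  have hμ : ∀ μ : ℂ, μ ^ p - y = ((nthRoots p y).map (fun r => μ - r)).prod := by
    intro μ
    have := congrArg (Polynomial.eval μ) hfact
    simpa [eval_multiset_prod, Multiset.map_map] using this
  -- assemble
  have hswap := multiset_prod_comm (nthRoots p y) s (fun r μ => μ - r)
  have lhs1 : (y • (1 : Matrix (Fin n) (Fin n) ℂ) - A ^ p).det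
      = (-1 : ℂ) ^ n * (A ^ p - y • (1 : Matrix (Fin n) (Fin n) ℂ)).det := by
    rw [show y • (1 : Matrix (Fin n) (Fin n) ℂ) - A ^ p
        = -(A ^ p - y • 1) from (neg_sub _ _).symm, Matrix.det_neg, Fintype.card_fin]
  rw [lhs1, hdets, hswap]
  have : (s.map (fun μ => ((nthRoots p y).map (fun r => μ - r)).prod)).prod
      = (s.map (fun μ => μ ^ p - y)).prod := by
    congr 1
    apply Multiset.map_congr rfl
    intro μ _
    exact (hμ μ).symm
  rw [this, show (fun μ : ℂ => y - μ ^ p) = (fun μ : ℂ => -(μ ^ p - y)) by ext μ; ring,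
    prod_map_neg', hsc]

lemma trace_pow_eq_sum_pow {n : ℕ} (A : Matrix (Fin n) (Fin n) ℂ) {p : ℕ} (hp : 0 < p) :
    (A ^ p).trace = (A.charpoly.roots.map (fun μ => μ ^ p)).sum := by
  rw [Matrix.trace_eq_sum_roots_charpoly]
  congr 1
  have hcp : (A ^ p).charpoly
      = ((A.charpoly.roots.map (fun μ => μ ^ p)).map (fun a => X - C a)).prod := by
    apply Polynomial.funext
    intro y
    rw [eval_charpoly'', det_smul_one_sub_pow A hp y, eval_multiset_prod]
    simp [Multiset.map_map]
  rw [hcp, roots_multiset_prod_X_sub_C]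

lemma det_one_add {n : ℕ} (A : Matrix (Fin n) (Fin n) ℂ) :
    (1 + A).det = (A.charpoly.roots.map (fun μ => 1 + μ)).prod := by
  have h := eval_charpoly'' A (-1)
  have hs : A.charpoly = (A.charpoly.roots.map fun a => X - C a).prod :=
    (IsAlgClosed.splits _).eq_prod_roots_of_monic A.charpoly_monic
  have hsc : Multiset.card A.charpoly.roots = n := by
    rw [splits_iff_card_roots.mp (IsAlgClosed.splits _),
      Matrix.charpoly_natDegree_eq_dim, Fintype.card_fin]
  rw [hs, eval_multiset_prod, Multiset.map_map] at h
  have h2 : (-1 : ℂ) • (1 : Matrix (Fin n) (Fin n) ℂ) - A = -(1 + A) := by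
    simp [neg_add]; abel
  rw [h2, Matrix.det_neg, Fintype.card_fin] at h
  have h3 : (Multiset.map ((fun x => Polynomial.eval (-1) x) ∘ fun a => X - C a)
      A.charpoly.roots).prod = (-1 : ℂ) ^ n * (A.charpoly.roots.map (fun μ => 1 + μ)).prod := by
    have h4 : (Multiset.map ((fun x => Polynomial.eval (-1) x) ∘ fun a => X - C a)
        A.charpoly.roots) = A.charpoly.roots.map (fun μ => -(1 + μ)) := by
      apply Multiset.map_congr rfl
      intro μ _
      simp; ring
    rw [h4, prod_map_neg', hsc]
  exact (mul_left_cancel₀ (by simp : ((-1 : ℂ) ^ n) ≠ 0) (h3.symm.trans h)).symm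

lemma exp_sub_one_norm_bound (z : ℂ) : ‖Complex.exp z - 1‖ ≤ Real.exp ‖z‖ - 1 := by
  have hsC : Summable (fun n : ℕ => z ^ n / n.factorial) :=
    NormedSpace.expSeries_div_summable z
  have hsR : Summable (fun n : ℕ => ‖z‖ ^ n / n.factorial) :=
    Real.summable_pow_div_factorial ‖z‖
  have heC : Complex.exp z = ∑' n : ℕ, z ^ n / n.factorial := by
    rw [Complex.exp_eq_exp_ℂ, NormedSpace.exp_eq_tsum_div]
  have heR : Real.exp ‖z‖ = ∑' n : ℕ, ‖z‖ ^ n / n.factorial := by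
    rw [Real.exp_eq_exp_ℝ, NormedSpace.exp_eq_tsum_div]
  have hC := Summable.sum_add_tsum_nat_add (f := fun n : ℕ => z ^ n / n.factorial) 1 hsC
  have hR := Summable.sum_add_tsum_nat_add (f := fun n : ℕ => ‖z‖ ^ n / n.factorial) 1 hsR
  simp only [Finset.range_one, Finset.sum_singleton, pow_zero, Nat.factorial_zero,
    Nat.cast_one, div_one] at hC hR
  have h1 : Complex.exp z - 1 = ∑' n : ℕ, z ^ (n + 1) / (n + 1).factorial := by
    rw [heC, ← hC]; ring
  have h2 : Real.exp ‖z‖ - 1 = ∑' n : ℕ, ‖z‖ ^ (n + 1) / (n + 1).factorial := by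
    rw [heR, ← hR]; ring
  rw [h1, h2]
  refine tsum_of_norm_bounded ((summable_nat_add_iff 1).mpr hsR).hasSum ?_
  intro i
  simp [norm_div, abs_of_nonneg]

lemma exp_sub_one_le_mul_exp {x : ℝ} (hx : 0 ≤ x) : Real.exp x - 1 ≤ x * Real.exp x := by
  have h := Real.add_one_le_exp (-x)
  have hpos := Real.exp_pos x
  have hinv : Real.exp (-x) = (Real.exp x)⁻¹ := Real.exp_neg x
  rw [hinv] at h
  have h2 := mul_le_mul_of_nonneg_right h hpos.le
  rw [inv_mul_cancel₀ hpos.ne'] at h2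
  nlinarith

lemma exp_sub_one_le_74 {x : ℝ} (hx0 : 0 ≤ x) (hx1 : x ≤ 1) :
    Real.exp x - 1 ≤ 7 / 4 * x := by
  have hc := convexOn_exp.2 (Set.mem_univ (0:ℝ)) (Set.mem_univ (1:ℝ))
    (by linarith : (0:ℝ) ≤ 1 - x) (by linarith : (0:ℝ) ≤ x) (by ring)
  simp only [smul_eq_mul, mul_zero, mul_one, zero_add, Real.exp_zero] at hc
  have he := Real.exp_one_lt_d9
  nlinarith

lemma log_tail_bound {ρ : ℝ} (hρ0 : 0 ≤ ρ) (hρ1 : ρ < 1) {μ : ℂ} (hμ : ‖μ‖ ≤ ρ) (m : ℕ) :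
    ‖Complex.log (1 + μ) - ∑ p ∈ Finset.range (m + 1), ((-1 : ℂ) ^ (p + 1) * μ ^ p / p)‖
      ≤ ρ ^ m * (-Real.log (1 - ρ)) := by
  have hμ1 : ‖μ‖ < 1 := lt_of_le_of_lt hμ hρ1
  have hlog := Complex.hasSum_taylorSeries_log hμ1
  have hsumm := hlog.summable
  have htail := Summable.sum_add_tsum_nat_add (f := fun p : ℕ => (-1 : ℂ) ^ (p + 1) * μ ^ p / p)
    (m + 1) hsumm
  rw [hlog.tsum_eq] at htail
  have h1 : Complex.log (1 + μ) - ∑ p ∈ Finset.range (m + 1), ((-1 : ℂ) ^ (p + 1) * μ ^ p / p)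
      = ∑' q : ℕ, ((-1 : ℂ) ^ ((q + (m + 1)) + 1) * μ ^ (q + (m + 1)) / (q + (m + 1) : ℕ)) :=
    (sub_eq_iff_eq_add').mpr htail.symm
  rw [h1]
  have hg : HasSum (fun q : ℕ => ρ ^ m * (ρ ^ (q + 1) / (q + 1)))
      (ρ ^ m * (-Real.log (1 - ρ))) :=
    (Real.hasSum_pow_div_log_of_abs_lt_one (by rwa [abs_of_nonneg hρ0])).mul_left _
  refine tsum_of_norm_bounded hg ?_
  intro q
  have hnorm : ‖(-1 : ℂ) ^ ((q + (m + 1)) + 1) * μ ^ (q + (m + 1)) / ((q + (m + 1) : ℕ) : ℂ)‖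
      = ‖μ‖ ^ (q + (m + 1)) / ((q + (m + 1) : ℕ) : ℝ) := by
    rw [norm_div, norm_mul, norm_pow, norm_pow, Complex.norm_natCast]
    simp
  rw [hnorm]
  have hle1 : ‖μ‖ ^ (q + (m + 1)) ≤ ρ ^ m * ρ ^ (q + 1) := by
    rw [← pow_add]
    calc ‖μ‖ ^ (q + (m + 1)) ≤ ρ ^ (q + (m + 1)) := pow_le_pow_left₀ (norm_nonneg μ) hμ _
      _ = ρ ^ (m + (q + 1)) := by ring_nf
  calc ‖μ‖ ^ (q + (m + 1)) / ((q + (m + 1) : ℕ) : ℝ)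
      ≤ (ρ ^ m * ρ ^ (q + 1)) / ((q + 1 : ℕ) : ℝ) := by
        apply div_le_div₀ (by positivity) hle1 (by positivity)
        push_cast; linarith
    _ = ρ ^ m * (ρ ^ (q + 1) / (q + 1)) := by push_cast; ring

end Aux

/-- **Theorem (sequence of determinant approximations).**
Let `M_D` be the pinching of `M`, `A = M_D⁻¹ M_off` with `ρ = ρ(A) < 1`, and
`c = -n ln(1-ρ)`. With `L_m = Σ_{p=1}^m ((-1)^{p-1}/p) trace(A^p)` and
`Δ_m = det(M_D) exp(L_m)`, for every `m ≥ 1` one has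
`|det M - Δ_m| / |Δ_m| ≤ c ρ^m e^{c ρ^m}`, and if moreover `c ρ^m < 1` then
`|det M - Δ_m| / |Δ_m| ≤ (7/4) c ρ^m`. -/
theorem stmt7 {n k : ℕ} (hn : 1 ≤ n)
    (M : Matrix (Fin n) (Fin n) ℂ) (b : Fin n → Fin k)
    (MD Moff A : Matrix (Fin n) (Fin n) ℂ)
    (hMD : MD = pinch b M) (hMoff : Moff = M - MD) (hA : A = MD⁻¹ * Moff)
    (hMDinv : IsUnit MD.det)
    (ρ : ℝ)
    (hρub : ∀ μ ∈ A.charpoly.roots, ‖μ‖ ≤ ρ)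
    (hρmax : ∃ μ ∈ A.charpoly.roots, ‖μ‖ = ρ)
    (hρ1 : ρ < 1)
    (c : ℝ) (hc : c = -(n : ℝ) * Real.log (1 - ρ))
    (L : ℕ → ℂ)
    (hL : ∀ m, L m = ∑ p ∈ Finset.Icc 1 m, ((-1 : ℂ) ^ (p - 1) / p) * (A ^ p).trace)
    (Δ : ℕ → ℂ) (hΔ : ∀ m, Δ m = MD.det * Complex.exp (L m)) :
    ∀ m : ℕ, 1 ≤ m →
      ‖M.det - Δ m‖ / ‖Δ m‖ ≤
        c * ρ ^ m * Real.exp (c * ρ ^ m) ∧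
      (c * ρ ^ m < 1 →
        ‖M.det - Δ m‖ / ‖Δ m‖ ≤ 7 / 4 * (c * ρ ^ m)) := by
  intro m hm
  set s := A.charpoly.roots with hs_def
  have hsc : Multiset.card s = n := by
    rw [hs_def, Polynomial.splits_iff_card_roots.mp (IsAlgClosed.splits _),
      Matrix.charpoly_natDegree_eq_dim, Fintype.card_fin]
  have hub : ∀ μ ∈ s, ‖μ‖ ≤ ρ := by
    intro μ hμ; exact hρub μ hμ
  have hρ0 : 0 ≤ ρ := by
    obtain ⟨μ, _, hμ⟩ := hρmax
    rw [← hμ]; exact norm_nonneg _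
  have hlog0 : Real.log (1 - ρ) ≤ 0 := Real.log_nonpos (by linarith) (by linarith)
  have hc0 : 0 ≤ c := by
    rw [hc]
    have hn0 : (0:ℝ) ≤ (n:ℝ) := Nat.cast_nonneg n
    nlinarith
  have hx0 : 0 ≤ c * ρ ^ m := mul_nonneg hc0 (pow_nonneg hρ0 m)
  set P : ℂ → ℂ := fun μ => ∑ p ∈ Finset.range (m + 1), ((-1 : ℂ) ^ (p + 1) * μ ^ p / p)
    with hP_def
  set T : ℂ → ℂ := fun μ => Complex.log (1 + μ) - P μ with hT_def
  set R : ℂ := (s.map T).sum with hR_def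
  -- L m as a sum over eigenvalues
  have hLm : L m = (s.map P).sum := by
    rw [hL]
    have step1 : ∀ p ∈ Finset.Icc 1 m, ((-1 : ℂ) ^ (p - 1) / p) * (A ^ p).trace
        = (s.map (fun μ => (-1 : ℂ) ^ (p + 1) * μ ^ p / p)).sum := by
      intro p hp
      have hp1 : 0 < p := by
        simp only [Finset.mem_Icc] at hp; omega
      rw [trace_pow_eq_sum_pow A hp1, ← Multiset.sum_map_mul_left, hs_def]
      congr 1
      apply Multiset.map_congr rfl
      intro μ _
      have hpow : (-1 : ℂ) ^ (p + 1) = (-1 : ℂ) ^ (p - 1) := by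
        have : p + 1 = (p - 1) + 2 := by omega
        rw [this, pow_add]; simp
      rw [hpow]; ring
    rw [Finset.sum_congr rfl step1, multiset_sum_finset_sum]
    congr 1
    apply Multiset.map_congr rfl
    intro μ _
    rw [hP_def]
    refine Finset.sum_subset ?_ ?_
    · intro x hx
      simp only [Finset.mem_Icc] at hx
      simp only [Finset.mem_range]; omega
    · intro x hx hnx
      simp only [Finset.mem_Icc] at hnx
      simp only [Finset.mem_range] at hx
      have : x = 0 := by omega
      subst this
      simp
  have hne : ∀ μ ∈ s, (1 : ℂ) + μ ≠ 0 := by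
    intro μ hμ h
    have h1 : μ = -1 := by linear_combination h
    have := hub μ hμ
    rw [h1] at this
    simp only [norm_neg, norm_one] at this
    linarith
  -- determinant identity
  have hfactM : MD * (1 + A) = M := by
    rw [Matrix.mul_add, Matrix.mul_one, hA, ← Matrix.mul_assoc,
      Matrix.mul_nonsing_inv MD hMDinv, Matrix.one_mul, hMoff]
    abel
  have hprod : (s.map (fun μ => 1 + μ)).prod = Complex.exp (L m + R) := by
    have hsum : L m + R = (s.map (fun μ => Complex.log (1 + μ))).sum := by
      rw [hLm, hR_def, ← Multiset.sum_map_add]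
      congr 1
      apply Multiset.map_congr rfl
      intro μ _
      rw [hT_def]; ring
    rw [hsum, exp_multiset_sum, Multiset.map_map]
    congr 1
    apply Multiset.map_congr rfl
    intro μ hμ
    exact (Complex.exp_log (hne μ hμ)).symm
  have hdetM : M.det = Δ m * Complex.exp R := by
    rw [← hfactM, Matrix.det_mul, det_one_add, ← hs_def, hprod, hΔ, Complex.exp_add]
    ring
  have hΔ0 : Δ m ≠ 0 := by
    rw [hΔ]
    exact mul_ne_zero hMDinv.ne_zero (Complex.exp_ne_zero _)
  have hratio : ‖M.det - Δ m‖ / ‖Δ m‖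
      = ‖Complex.exp R - 1‖ := by
    have h1 : M.det - Δ m = Δ m * (Complex.exp R - 1) := by rw [hdetM]; ring
    rw [h1, norm_mul, mul_comm, mul_div_assoc, div_self (by simpa using hΔ0), mul_one]
  have hRb : ‖R‖ ≤ c * ρ ^ m := by
    calc ‖R‖ ≤ ((s.map T).map (fun x => ‖x‖)).sum := norm_multiset_sum_le _
      _ = (s.map (fun μ => ‖T μ‖)).sum := by rw [Multiset.map_map]; rfl
      _ ≤ (s.map (fun _ => ρ ^ m * (-Real.log (1 - ρ)))).sum := by
          apply Multiset.sum_map_le_sum_map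
          intro μ hμ
          exact log_tail_bound hρ0 hρ1 (hub μ hμ) m
      _ = (n : ℝ) * (ρ ^ m * (-Real.log (1 - ρ))) := by
          rw [Multiset.map_const', Multiset.sum_replicate, hsc, nsmul_eq_mul]
      _ = c * ρ ^ m := by rw [hc]; ring
  have hkey : ‖Complex.exp R - 1‖ ≤ Real.exp (c * ρ ^ m) - 1 := by
    calc ‖Complex.exp R - 1‖ ≤ Real.exp ‖R‖ - 1 := exp_sub_one_norm_bound R
      _ ≤ Real.exp (c * ρ ^ m) - 1 := by
          have := Real.exp_le_exp.mpr hRb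
          linarith
  rw [hratio]
  constructor
  · calc ‖Complex.exp R - 1‖ ≤ Real.exp (c * ρ ^ m) - 1 := hkey
      _ ≤ (c * ρ ^ m) * Real.exp (c * ρ ^ m) := exp_sub_one_le_mul_exp hx0
      _ = c * ρ ^ m * Real.exp (c * ρ ^ m) := by ring
  · intro hx1
    calc ‖Complex.exp R - 1‖ ≤ Real.exp (c * ρ ^ m) - 1 := hkey
      _ ≤ 7 / 4 * (c * ρ ^ m) := exp_sub_one_le_74 hx0 hx1.le
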